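/- Let R be a ring, let γ_1, …, γ_m be elements of R, and let (a_k^j), 1 ≤ k ≤ n, 1 ≤ j ≤ m, be elements of R that commute pairwise with each other and commute with every γ_i. Set T_k = Σ_{j=1}^m a_k^j γ_j for k = 1,…,n. Then [T_1, T_2, …, T_n] = Σ_F Det(a(F))·[γ_{j_1(F)}, …, γ_{j_n(F)}], where the sum is over all subsets F = {j_1(F) < j_2(F) < … < j_n(F)} of {1,…,m} with exactly n elements, a(F) is the n×n matrix obtained by restricting (a_k^j) to the columns j ∈ F (in increasing order), and Det(a(F)) = Σ_σ ε(σ) ∏_{k=1}^n a_k^{j_{σ(k)}(F)}. -/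

import Mathlib

/-- The multicommutator `[T_1, …, T_n] = Σ_σ ε(σ) T_{σ(1)} ⋯ T_{σ(n)}` of elements of a
(possibly noncommutative) ring. -/
noncomputable def multicom {R : Type*} [Ring R] {n : ℕ} (T : Fin n → R) : R :=
  ∑ σ : Equiv.Perm (Fin n), (Equiv.Perm.sign σ : ℤ) • (List.ofFn fun i => T (σ i)).prod

private lemma listprod_sum {R : Type*} [Ring R] {n m : ℕ} (f : Fin n → Fin m → R) :
    (List.ofFn fun k => ∑ j, f k j).prod
      = ∑ g : Fin n → Fin m, (List.ofFn fun k => f k (g k)).prod := by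
  induction n with
  | zero => simp
  | succ n ih =>
    rw [List.ofFn_succ, List.prod_cons, ih (fun k j => f k.succ j), Finset.sum_mul_sum]
    rw [← (Fin.consEquiv (fun _ : Fin (n+1) => Fin m)).sum_comp]
    rw [Fintype.sum_prod_type]
    refine Finset.sum_congr rfl fun j _ => Finset.sum_congr rfl fun g _ => ?_
    simp [List.ofFn_succ, Fin.consEquiv, List.prod_cons]

private lemma listprod_mul_of_commute {R : Type*} [Ring R] {n : ℕ} (b c : Fin n → R)
    (h : ∀ k l, Commute (c k) (b l)) :
    (List.ofFn fun k => b k * c k).prod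
      = (List.ofFn b).prod * (List.ofFn c).prod := by
  induction n with
  | zero => simp
  | succ n ih =>
    rw [List.ofFn_succ, List.ofFn_succ (f := b), List.ofFn_succ (f := c),
      List.prod_cons, List.prod_cons, List.prod_cons,
      ih (fun k => b k.succ) (fun k => c k.succ) (fun k l => h _ _)]
    have hc : Commute (c 0) ((List.ofFn fun k => b k.succ).prod) := by
      apply Commute.list_prod_right
      intro y hy
      obtain ⟨i, rfl⟩ := List.mem_ofFn.1 hy
      exact h 0 _
    rw [mul_assoc, mul_assoc, ← mul_assoc (c 0), hc.eq, mul_assoc]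

/-- Product of an `ofFn` list of pairwise commuting elements is invariant under
permutation of the indices. -/
private lemma prod_ofFn_comp_perm {R : Type*} [Ring R] {n : ℕ} (b : Fin n → R)
    (hb : ∀ k l, Commute (b k) (b l)) (τ : Equiv.Perm (Fin n)) :
    (List.ofFn fun k => b (τ k)).prod = (List.ofFn b).prod := by
  refine List.Perm.prod_eq' ?_ ?_
  · exact Equiv.Perm.ofFn_comp_perm τ b
  · exact List.pairwise_ofFn.2 fun i j _ => hb _ _

/-- The hand-rolled determinant of the `n × n` matrix `(k, l) ↦ a k (g l)`. -/
private noncomputable def detAux {R : Type*} [Ring R] {n m : ℕ}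
    (a : Fin n → Fin m → R) (g : Fin n → Fin m) : R :=
  ∑ σ : Equiv.Perm (Fin n),
    (Equiv.Perm.sign σ : ℤ) • (List.ofFn fun k => a (σ k) (g k)).prod

private lemma detAux_eq_zero {R : Type*} [Ring R] {n m : ℕ}
    (a : Fin n → Fin m → R) (hcomm : ∀ k j k' j', Commute (a k j) (a k' j'))
    {g : Fin n → Fin m} {i j : Fin n} (hij : i ≠ j) (hg : g i = g j) :
    detAux a g = 0 := by
  unfold detAux
  have hgs : ∀ k, g (Equiv.swap i j k) = g k := by
    intro k
    rcases eq_or_ne k i with rfl | hki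
    · rw [Equiv.swap_apply_left]; exact hg.symm
    rcases eq_or_ne k j with rfl | hkj
    · rw [Equiv.swap_apply_right]; exact hg
    · rw [Equiv.swap_apply_of_ne_of_ne hki hkj]
  refine Finset.sum_ninvolution (fun σ => σ * Equiv.swap i j) ?_ ?_ (fun _ => Finset.mem_univ _) ?_
  · intro σ
    have h1 : (List.ofFn fun k => a ((σ * Equiv.swap i j) k) (g k)).prod
        = (List.ofFn fun k => a (σ k) (g k)).prod := by
      have : (fun k => a ((σ * Equiv.swap i j) k) (g k))
          = fun k => a (σ (Equiv.swap i j k)) (g (Equiv.swap i j k)) := by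
        funext k
        rw [Equiv.Perm.mul_apply, hgs]
      rw [this]
      exact prod_ofFn_comp_perm (fun k => a (σ k) (g k)) (fun k l => hcomm _ _ _ _) _
    rw [h1]
    have h2 : ((Equiv.Perm.sign (σ * Equiv.swap i j) : ℤ)) = -(Equiv.Perm.sign σ : ℤ) := by
      rw [Equiv.Perm.sign_mul, Equiv.Perm.sign_swap hij]
      simp
    rw [h2, neg_smul, add_neg_cancel]
  · intro σ _
    exact fun h => hij (Equiv.mul_swap_eq_iff.1 h)
  · intro σ
    show σ * Equiv.swap i j * Equiv.swap i j = σ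
    rw [mul_assoc, Equiv.swap_mul_self, mul_one]

private lemma detAux_comp_perm {R : Type*} [Ring R] {n m : ℕ}
    (a : Fin n → Fin m → R) (hcomm : ∀ k j k' j', Commute (a k j) (a k' j'))
    (g : Fin n → Fin m) (τ : Equiv.Perm (Fin n)) :
    detAux a (g ∘ τ) = (Equiv.Perm.sign τ : ℤ) • detAux a g := by
  unfold detAux
  rw [Finset.smul_sum]
  refine Fintype.sum_equiv (Equiv.mulRight τ⁻¹) _ _ fun σ => ?_
  simp only [Equiv.coe_mulRight]
  have hb : (List.ofFn fun k => a (σ k) ((g ∘ τ) k)).prod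
      = (List.ofFn fun k => a ((σ * τ⁻¹) k) (g k)).prod := by
    have h := prod_ofFn_comp_perm (fun k => a ((σ * τ⁻¹) k) (g k))
      (fun k l => hcomm _ _ _ _) τ
    have hfun : (fun k => a (σ k) ((g ∘ τ) k))
        = fun k => a ((σ * τ⁻¹) (τ k)) (g (τ k)) := by
      funext k
      simp [Equiv.Perm.mul_apply]
    rw [hfun]
    exact h
  rw [hb, smul_smul]
  congr 1
  have hsq : ((Equiv.Perm.sign τ : ℤ)) * ((Equiv.Perm.sign τ : ℤ)) = 1 := by
    rw [← Units.val_mul, Int.units_mul_self, Units.val_one]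
  rw [Equiv.Perm.sign_mul, Equiv.Perm.sign_inv]
  push_cast
  rw [mul_comm ((Equiv.Perm.sign σ : ℤ)) _, ← mul_assoc, hsq, one_mul]

private lemma detAux_transpose {R : Type*} [Ring R] {n m : ℕ}
    (a : Fin n → Fin m → R) (hcomm : ∀ k j k' j', Commute (a k j) (a k' j'))
    (g : Fin n → Fin m) :
    detAux a g = ∑ σ : Equiv.Perm (Fin n),
      (Equiv.Perm.sign σ : ℤ) • (List.ofFn fun k => a k (g (σ k))).prod := by
  unfold detAux
  refine Fintype.sum_equiv (Equiv.inv (Equiv.Perm (Fin n))) _ _ fun σ => ?_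
  simp only [Equiv.inv_apply]
  have hb : (List.ofFn fun k => a (σ k) (g k)).prod
      = (List.ofFn fun k => a k (g (σ⁻¹ k))).prod := by
    have h := prod_ofFn_comp_perm (fun k => a k (g (σ⁻¹ k)))
      (fun k l => hcomm _ _ _ _) σ
    have hfun : (fun k => a (σ k) (g k))
        = fun k => a (σ k) (g (σ⁻¹ (σ k))) := by
      funext k
      simp
    rw [hfun]
    exact h
  rw [hb, Equiv.Perm.sign_inv]

private lemma orderIsoOfFin_congr {α : Type*} [LinearOrder α] {n : ℕ}
    {F F' : Finset α} (h : F = F') (hF : F.card = n) (hF' : F'.card = n) (k : Fin n) :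
    (F.orderIsoOfFin hF k : α) = F'.orderIsoOfFin hF' k := by
  subst h; rfl

/-- Rectangular case: if the coefficients `a k j` (`1 ≤ k ≤ n`, `1 ≤ j ≤ m`) commute pairwise
with each other and with all the `γ i`, and `T_k = Σ_{j=1}^m a_k^j γ_j`, then
`[T_1, …, T_n] = Σ_F Det(a(F)) · [γ_{j_1(F)}, …, γ_{j_n(F)}]`, the sum running over all
`n`-element subsets `F = {j_1(F) < … < j_n(F)}` of `{1, …, m}`. -/
theorem multicom_rectangular {R : Type*} [Ring R] {n m : ℕ} (γ : Fin m → R)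
    (a : Fin n → Fin m → R)
    (hcomm : ∀ k j k' j', Commute (a k j) (a k' j'))
    (hcommγ : ∀ k j i, Commute (a k j) (γ i)) :
    multicom (fun k => ∑ j, a k j * γ j) =
      ∑ F : {F : Finset (Fin m) // F.card = n},
        (∑ σ : Equiv.Perm (Fin n),
            (Equiv.Perm.sign σ : ℤ) •
              (List.ofFn fun k => a k ((F.1.orderIsoOfFin F.2 (σ k) : Fin m))).prod) *
          multicom (fun k => γ ((F.1.orderIsoOfFin F.2 k : Fin m))) := by
  classical
  let e : {F : Finset (Fin m) // F.card = n} → Fin n → Fin m :=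
    fun F k => (F.1.orderIsoOfFin F.2 k : Fin m)
  let Γ : (Fin n → Fin m) → R := fun g => (List.ofFn fun k => γ (g k)).prod
  have step1 : multicom (fun k => ∑ j, a k j * γ j)
      = ∑ g : Fin n → Fin m, detAux a g * Γ g := by
    unfold multicom
    have h1 : ∀ σ : Equiv.Perm (Fin n),
        (List.ofFn fun i => ∑ j, a (σ i) j * γ j).prod
          = ∑ g : Fin n → Fin m, (List.ofFn fun k => a (σ k) (g k)).prod * Γ g := by
      intro σ
      rw [listprod_sum (f := fun k j => a (σ k) j * γ j)]
      exact Finset.sum_congr rfl fun g _ =>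
        listprod_mul_of_commute _ _ (fun k l => (hcommγ _ _ _).symm)
    simp_rw [h1, Finset.smul_sum]
    rw [Finset.sum_comm]
    refine Finset.sum_congr rfl fun g _ => ?_
    unfold detAux
    rw [Finset.sum_mul]
    simp_rw [smul_mul_assoc]
  have he_inj : ∀ F, Function.Injective (e F) := by
    intro F x y hxy
    exact (F.1.orderIsoOfFin F.2).injective (Subtype.coe_injective hxy)
  have himage : ∀ (F : {F : Finset (Fin m) // F.card = n}) (τ : Equiv.Perm (Fin n)),
      Finset.univ.image (fun k => e F (τ k)) = F.1 := by
    intro F τ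
    ext x
    simp only [Finset.mem_image, Finset.mem_univ, true_and]
    constructor
    · rintro ⟨k, rfl⟩; exact (F.1.orderIsoOfFin F.2 (τ k)).2
    · intro hx
      refine ⟨τ.symm ((F.1.orderIsoOfFin F.2).symm ⟨x, hx⟩), ?_⟩
      show e F (τ (τ.symm _)) = x
      rw [Equiv.apply_symm_apply]
      exact congrArg Subtype.val ((F.1.orderIsoOfFin F.2).apply_symm_apply ⟨x, hx⟩)
  have hvanish : ∀ g ∈ (Finset.univ : Finset (Fin n → Fin m)),
      detAux a g * Γ g ≠ 0 → Function.Injective g := by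
    intro g _ hne
    by_contra hg
    apply hne
    rw [Function.not_injective_iff] at hg
    obtain ⟨i, j, hgij, hij⟩ := hg
    rw [detAux_eq_zero a hcomm hij hgij, zero_mul]
  have step3 : (∑ p : {F : Finset (Fin m) // F.card = n} × Equiv.Perm (Fin n),
        detAux a (e p.1 ∘ p.2) * Γ (e p.1 ∘ p.2))
      = ∑ g : Fin n → Fin m, detAux a g * Γ g := by
    rw [← Finset.sum_filter_of_ne hvanish]
    refine Finset.sum_bij (fun p _ => e p.1 ∘ p.2) ?_ ?_ ?_ ?_
    · intro p _
      simp only [Finset.mem_filter, Finset.mem_univ, true_and]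
      exact (he_inj p.1).comp p.2.injective
    · rintro ⟨F₁, τ₁⟩ _ ⟨F₂, τ₂⟩ _ hp
      have hF : F₁ = F₂ := by
        apply Subtype.ext
        rw [← himage F₁ τ₁, ← himage F₂ τ₂]
        exact congrArg (fun f => Finset.univ.image f) hp
      subst hF
      have hτ : τ₁ = τ₂ := Equiv.ext fun k => he_inj F₁ (congrFun hp k)
      rw [hτ]
    · intro g hg
      simp only [Finset.mem_filter, Finset.mem_univ, true_and] at hg
      have hcard : (Finset.univ.image g).card = n := by
        rw [Finset.card_image_of_injective _ hg, Finset.card_univ, Fintype.card_fin]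
      set F : {F : Finset (Fin m) // F.card = n} := ⟨Finset.univ.image g, hcard⟩ with hF
      have hmem : ∀ k, g k ∈ F.1 := fun k => Finset.mem_image_of_mem g (Finset.mem_univ k)
      have hbij : Function.Bijective
          (fun k => (F.1.orderIsoOfFin F.2).symm ⟨g k, hmem k⟩) := by
        rw [← Finite.injective_iff_bijective]
        intro x y hxy
        apply hg
        have := (F.1.orderIsoOfFin F.2).symm.injective hxy
        exact congrArg Subtype.val this
      refine ⟨⟨F, Equiv.ofBijective _ hbij⟩, Finset.mem_univ _, ?_⟩
      funext k
      show e F ((F.1.orderIsoOfFin F.2).symm ⟨g k, hmem k⟩) = g k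
      exact congrArg Subtype.val ((F.1.orderIsoOfFin F.2).apply_symm_apply ⟨g k, hmem k⟩)
    · intro p _; rfl
  rw [step1, ← step3, Fintype.sum_prod_type]
  refine Finset.sum_congr rfl fun F _ => ?_
  have hcoeff : detAux a (e F)
      = ∑ σ : Equiv.Perm (Fin n),
          (Equiv.Perm.sign σ : ℤ) •
            (List.ofFn fun k => a k ((F.1.orderIsoOfFin F.2 (σ k) : Fin m))).prod :=
    detAux_transpose a hcomm (e F)
  rw [← hcoeff]
  have hterm : ∀ τ : Equiv.Perm (Fin n),
      detAux a (e F ∘ τ) * Γ (e F ∘ τ)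
        = detAux a (e F) * ((Equiv.Perm.sign τ : ℤ) • Γ (e F ∘ τ)) := by
    intro τ
    rw [detAux_comp_perm a hcomm (e F) τ, smul_mul_assoc, mul_smul_comm]
  simp_rw [hterm]
  rw [← Finset.mul_sum]
  show _ = _ * multicom (fun k => γ (e F k))
  unfold multicom
  rfl
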